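/- Let q = 2^r and for β ∈ F_q let N_{DC⁻(n,q)}(β) = |{w ∈ DC⁻(n,q) : Tr w = β}|. Then: (a) for every odd n ≥ 3 and every q, N_{DC⁻(n,q)}(β) > 0 for all β ∈ F_q; (b) for n = 1 and every q, N_{DC⁻(1,q)}(β) = q if β = 0, N_{DC⁻(1,q)}(β) = 2q if β ≠ 0 and tr(β^{−1}) = 0, and N_{DC⁻(1,q)}(β) = 0 if β ≠ 0 and tr(β^{−1}) = 1. -/

import Mathlib

open scoped Classical
open Finset Matrix

noncomputable section

/-- The trace map `tr : F_q → F_2`, viewed inside `F`: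
`tr(x) = x + x² + ⋯ + x^(2^(r−1))`. -/
def trF (F : Type*) [Field F] (r : ℕ) (x : F) : F :=
  ∑ i ∈ Finset.range r, x ^ (2 ^ i)

/-- The canonical additive character `λ(x) = (−1)^(tr x)`, valued in `ℚ`. -/
def lam (F : Type*) [Field F] (r : ℕ) (x : F) : ℚ :=
  if trF F r x = 0 then 1 else -1

/-- The Kloosterman sum `K(λ;a)`. -/
def Kl (F : Type*) [Field F] [Fintype F] (r : ℕ) (a : F) : ℚ :=
  ∑ α : Fˣ, lam F r ((α : F) + a * ((α : F))⁻¹)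

/-- The 2-dimensional Kloosterman sum `K₂(λ;a)`. -/
def Kl2 (F : Type*) [Field F] [Fintype F] (r : ℕ) (a : F) : ℚ :=
  ∑ α : Fˣ, ∑ β : Fˣ, lam F r ((α : F) + (β : F) + a * ((α : F))⁻¹ * ((β : F))⁻¹)

/-- The m-dimensional Kloosterman sum `K_m(λ;a)`; `K₀(λ;a) = λ(a)`. -/
def Klm (F : Type*) [Field F] [Fintype F] (r m : ℕ) (a : F) : ℚ :=
  ∑ α : Fin m → Fˣ, lam F r ((∑ i, ((α i : F))) + a * ∏ i, ((α i : F))⁻¹)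

/-- Power moments of Kloosterman sums, `MK^h`. -/
def MK (F : Type*) [Field F] [Fintype F] (r h : ℕ) : ℚ :=
  ∑ a : Fˣ, (Kl F r (a : F)) ^ h

/-- Power moments of 2-dimensional Kloosterman sums, `MK₂^h`. -/
def MK2 (F : Type*) [Field F] [Fintype F] (r h : ℕ) : ℚ :=
  ∑ a : Fˣ, (Kl2 F r (a : F)) ^ h

/-- Stirling numbers of the second kind. -/
def stirl (h t : ℕ) : ℚ :=
  (1 / (t.factorial : ℚ)) *
    ∑ j ∈ Finset.range (t + 1), (-1 : ℚ) ^ (t - j) * (t.choose j : ℚ) * (j : ℚ) ^ h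

/-- Binomial coefficient `binom(b,a)` with the convention that it is `0`
when `a < 0` or `a > b`. -/
def binomQ (b a : ℤ) : ℚ :=
  if 0 ≤ a ∧ a ≤ b then (b.toNat.choose a.toNat : ℚ) else 0

/-- The q-binomial coefficient `[n,r]_q`. -/
def qbinom (q n r : ℕ) : ℚ :=
  ∏ j ∈ Finset.range r, ((q : ℚ) ^ (n - j) - 1) / ((q : ℚ) ^ (r - j) - 1)

/-- `A⁻(n,q)`. -/
def Aneg (q n : ℕ) : ℚ :=
  (q : ℚ) ^ ((5 * n ^ 2 - 1) / 4) * qbinom q n 1 *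
    ∏ j ∈ Finset.range ((n - 1) / 2), ((q : ℚ) ^ (2 * (j + 1) - 1) - 1)

/-- `B⁻(n,q)`. -/
def Bneg (q n : ℕ) : ℚ :=
  (q : ℚ) ^ ((n - 1) ^ 2 / 4) * ((q : ℚ) ^ n - 1) *
    ∏ j ∈ Finset.range ((n - 1) / 2), ((q : ℚ) ^ (2 * (j + 1)) - 1)

/-- `A⁺(n,q)`. -/
def Apos (q n : ℕ) : ℚ :=
  (q : ℚ) ^ ((5 * n ^ 2 - 2 * n) / 4) * qbinom q n 2 *
    ∏ j ∈ Finset.range ((n - 2) / 2), ((q : ℚ) ^ (2 * (j + 1) - 1) - 1)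

/-- `B⁺(n,q)`. -/
def Bpos (q n : ℕ) : ℚ :=
  (q : ℚ) ^ ((n - 2) ^ 2 / 4) * ((q : ℚ) ^ n - 1) * ((q : ℚ) ^ (n - 1) - 1) *
    ∏ j ∈ Finset.range ((n - 2) / 2), ((q : ℚ) ^ (2 * (j + 1)) - 1)

/-- The type of `2n × 2n` matrices over `F`. -/
abbrev Mat (F : Type*) (n : ℕ) := Matrix (Fin n ⊕ Fin n) (Fin n ⊕ Fin n) F

/-- The maximal parabolic subgroup `P(2n,q)` of `Sp(2n,q)`, as a set of matrices. -/
def Pmat (F : Type*) [Field F] (n : ℕ) : Set (Mat F n) :=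
  {w | ∃ A B : Matrix (Fin n) (Fin n) F, IsUnit A ∧ Bᵀ = B ∧
        w = Matrix.fromBlocks A 0 0 (A⁻¹)ᵀ * Matrix.fromBlocks 1 B 0 1}

/-- The element `σ_r ∈ Sp(2n,q)`. -/
def sigmaMat (F : Type*) [Field F] (n r : ℕ) : Mat F n :=
  Matrix.fromBlocks
    (Matrix.of fun i j : Fin n => if i = j ∧ r ≤ (i : ℕ) then 1 else 0)
    (Matrix.of fun i j : Fin n => if i = j ∧ (i : ℕ) < r then 1 else 0)
    (Matrix.of fun i j : Fin n => if i = j ∧ (i : ℕ) < r then 1 else 0)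
    (Matrix.of fun i j : Fin n => if i = j ∧ r ≤ (i : ℕ) then 1 else 0)

/-- The double coset `P σ_r P` in `Sp(2n,q)`. -/
def DCoset (F : Type*) [Field F] (n r : ℕ) : Set (Mat F n) :=
  {w | ∃ p ∈ Pmat F n, ∃ p' ∈ Pmat F n, w = p * sigmaMat F n r * p'}

/-- `DC⁻(n,q) = P σ_(n−1) P`. -/
def DCneg (F : Type*) [Field F] (n : ℕ) : Set (Mat F n) := DCoset F n (n - 1)

/-- `DC⁺(n,q) = P σ_(n−2) P`. -/
def DCpos (F : Type*) [Field F] (n : ℕ) : Set (Mat F n) := DCoset F n (n - 2)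

/-- `N_S(β) = |{w ∈ S : Tr w = β}|`. -/
def NDC (F : Type*) [Field F] [Fintype F] (n : ℕ) (S : Set (Mat F n)) (β : F) : ℕ :=
  (Finset.univ.filter fun w => w ∈ S ∧ Matrix.trace w = β).card

/-- Hamming weight of a binary word. -/
def wordWeight {α : Type*} [Fintype α] (u : α → ZMod 2) : ℕ :=
  (Finset.univ.filter fun x => u x = 1).card

/-- The number of codewords of Hamming weight `j` in the binary code `C(S)`
consisting of all `u ∈ F_2^S` with `∑_{w ∈ S} u(w)·Tr(w) = 0` in `F`. -/
def weightCount (F : Type*) [Field F] [Fintype F] (n : ℕ) (S : Set (Mat F n)) (j : ℕ) : ℕ :=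
  Nat.card {u : S → ZMod 2 //
    (∑ w : S, if u w = 1 then Matrix.trace (w : Mat F n) else 0) = 0 ∧ wordWeight u = j}

/-- The Kloosterman sum `K(ψ;a)` for a general (complex-valued) additive character. -/
def KlC (F : Type*) [Field F] [Fintype F] (ψ : AddChar F ℂ) (a : F) : ℂ :=
  ∑ α : Fˣ, ψ ((α : F) + a * ((α : F))⁻¹)

/-- The Kloosterman sum `K_{GL(t,q)}(ψ;a)` for the general linear group. -/
def KGL (F : Type*) [Field F] [Fintype F] (ψ : AddChar F ℂ) (t : ℕ) (a : F) : ℂ :=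
  ∑ w : Matrix.GeneralLinearGroup (Fin t) F,
    ψ (Matrix.trace (w : Matrix (Fin t) (Fin t) F) +
       a * Matrix.trace ((↑(w⁻¹) : Matrix (Fin t) (Fin t) F)))

/-- The exponential sum `∑_{w ∈ S} ψ(Tr w)` over a set of matrices. -/
def expSum (F : Type*) [Field F] [Fintype F] (n : ℕ) (S : Set (Mat F n))
    (ψ : AddChar F ℂ) : ℂ :=
  ∑ w ∈ Finset.univ.filter (fun w => w ∈ S), ψ (Matrix.trace w)

/-- The exponential sum `∑_{w ∈ S} λ(a·Tr w)` over a set of matrices. -/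
def expSumQ (F : Type*) [Field F] [Fintype F] (r n : ℕ) (S : Set (Mat F n)) (a : F) : ℚ :=
  ∑ w ∈ Finset.univ.filter (fun w => w ∈ S), lam F r (a * Matrix.trace w)

/-- `tr` as a map to `ZMod 2`. -/
def trZ (F : Type*) [Field F] (r : ℕ) (x : F) : ZMod 2 :=
  if trF F r x = 0 then 0 else 1

section AuxiliaryLemmas

set_option linter.unusedSectionVars false

variable {F : Type*} [Field F] [Fintype F] {r : ℕ}

lemma charF (hr : 0 < r) (hF : Fintype.card F = 2 ^ r) : CharP F 2 := by
  haveI hc : CharP F (ringChar F) := ringChar.charP F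
  set p := ringChar F with hpdef
  have hpp : p.Prime := CharP.char_is_prime F p
  obtain ⟨n, _, hcard⟩ := FiniteField.card F p
  have h2 : p = 2 := by
    have hd : p ∣ 2 ^ r := by
      rw [← hF, hcard]; exact dvd_pow_self p n.pos.ne'
    have h2' := Nat.Prime.dvd_of_dvd_pow hpp hd
    have := Nat.le_of_dvd (by norm_num) h2'
    have := hpp.two_le
    omega
  rwa [h2] at hc

lemma trF_add' [CharP F 2] (r : ℕ) (x y : F) :
    trF F r (x + y) = trF F r x + trF F r y := by
  simp only [trF, ← Finset.sum_add_distrib]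
  exact Finset.sum_congr rfl fun i _ => add_pow_char_pow x y 2 i

lemma trF_sq [CharP F 2] (hF : Fintype.card F = 2 ^ r) (x : F) :
    trF F r (x ^ 2) = trF F r x := by
  have key : trF F r (x ^ 2) + x = trF F r x + x := by
    have h1 : ∀ i : ℕ, (x ^ 2) ^ (2 ^ i) = x ^ 2 ^ (i + 1) := by
      intro i; rw [← pow_mul, pow_succ, mul_comm (2^i) 2]
    calc trF F r (x ^ 2) + x = ∑ i ∈ Finset.range r, x ^ 2 ^ (i+1) + x ^ 2 ^ 0 := by
          simp [trF, h1]
      _ = ∑ i ∈ Finset.range (r+1), x ^ 2 ^ i :=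
          (Finset.sum_range_succ' (fun i => x ^ 2 ^ i) r).symm
      _ = trF F r x + x ^ 2 ^ r := Finset.sum_range_succ _ r
      _ = trF F r x + x := by rw [← hF, FiniteField.pow_card]
  exact add_right_cancel key

lemma trF_AS [CharP F 2] (hF : Fintype.card F = 2 ^ r) (t : F) :
    trF F r (t ^ 2 + t) = 0 := by
  rw [trF_add', trF_sq hF, CharTwo.add_self_eq_zero]

lemma AS_card [CharP F 2] (b : F) (h : ∃ t₀ : F, t₀ ^ 2 + t₀ = b) :
    (Finset.univ.filter fun t : F => t ^ 2 + t = b).card = 2 := by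
  obtain ⟨t₀, ht₀⟩ := h
  have htwo : (2 : F) = 0 := CharTwo.two_eq_zero
  have hset : Finset.univ.filter (fun t : F => t ^ 2 + t = b) = {t₀, t₀ + 1} := by
    ext t
    simp only [Finset.mem_filter, Finset.mem_univ, true_and, Finset.mem_insert,
      Finset.mem_singleton]
    constructor
    · intro h
      have h5 : t ^ 2 + t = t₀ ^ 2 + t₀ := h.trans ht₀.symm
      have h2 : (t + t₀) * (t + t₀ + 1) = 0 := by
        linear_combination h5 + (t * t₀ + t₀ ^ 2 + t₀) * htwo
      rcases mul_eq_zero.1 h2 with h3 | h3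
      · left; linear_combination h3 - t₀ * htwo
      · right; linear_combination h3 - (t₀ + 1) * htwo
    · rintro (rfl | rfl)
      · exact ht₀
      · rw [← ht₀]; linear_combination (t₀ + 1) * htwo
  rw [hset, Finset.card_insert_of_notMem, Finset.card_singleton]
  simp only [Finset.mem_singleton]
  intro h
  exact one_ne_zero (by linear_combination -h : (1 : F) = 0)

lemma exists_AS [CharP F 2] (hr : 0 < r) (hF : Fintype.card F = 2 ^ r) (c : F)
    (hc : trF F r c = 0) : ∃ t : F, t ^ 2 + t = c := by
  classical
  set ψ : F → F := fun t => t ^ 2 + t with hψ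
  set I : Finset F := Finset.univ.image ψ with hI
  set K : Finset F := Finset.univ.filter (fun x => trF F r x = 0) with hK
  have hIK : I ⊆ K := by
    intro b hb
    simp only [hI, Finset.mem_image] at hb
    obtain ⟨t, _, ht⟩ := hb
    simp only [hK, Finset.mem_filter, Finset.mem_univ, true_and]
    rw [← ht]; exact trF_AS hF t
  have htwo : (2 : F) = 0 := CharTwo.two_eq_zero
  have fib : ∀ b ∈ I, (Finset.univ.filter (fun t => ψ t = b)).card = 2 := by
    intro b hb
    simp only [hI, Finset.mem_image] at hb
    obtain ⟨t₀, _, ht₀⟩ := hb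
    have : Finset.univ.filter (fun t => ψ t = b) = {t₀, t₀ + 1} := by
      ext t
      simp only [Finset.mem_filter, Finset.mem_univ, true_and, Finset.mem_insert,
        Finset.mem_singleton]
      constructor
      · intro h
        have h5 : t ^ 2 + t = t₀ ^ 2 + t₀ := h.trans ht₀.symm
        have h2 : (t + t₀) * (t + t₀ + 1) = 0 := by
          linear_combination h5 + (t * t₀ + t₀ ^ 2 + t₀) * htwo
        rcases mul_eq_zero.1 h2 with h3 | h3
        · left; linear_combination h3 - t₀ * htwo
        · right; linear_combination h3 - (t₀ + 1) * htwo
      · rintro (rfl | rfl)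
        · exact ht₀
        · rw [← ht₀]
          show (t₀ + 1) ^ 2 + (t₀ + 1) = t₀ ^ 2 + t₀
          linear_combination (t₀ + 1) * htwo
    rw [this, Finset.card_insert_of_notMem, Finset.card_singleton]
    simp only [Finset.mem_singleton]
    intro h
    exact one_ne_zero (by linear_combination -h : (1 : F) = 0)
  have hq2 : Fintype.card F = 2 * I.card := by
    have := Finset.card_eq_sum_card_fiberwise (f := ψ) (s := Finset.univ) (t := I)
      (fun x _ => Finset.mem_image_of_mem ψ (Finset.mem_univ x))
    rw [Finset.card_univ] at this
    rw [this, Finset.sum_congr rfl fib, Finset.sum_const, smul_eq_mul, mul_comm]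
  have hKcard : K.card ≤ 2 ^ (r - 1) := by
    set P : Polynomial F := ∑ i ∈ Finset.range r, (Polynomial.X : Polynomial F) ^ (2 ^ i)
      with hP
    have hPne : P ≠ 0 := by
      intro h
      have hco : P.coeff (2 ^ (r - 1)) = 1 := by
        rw [hP, Polynomial.finset_sum_coeff]
        rw [Finset.sum_eq_single (r - 1)]
        · simp
        · intro i hi hne
          rw [Polynomial.coeff_X_pow]
          have h6 : 2 ^ (r - 1) ≠ 2 ^ i := fun h =>
            hne (Nat.pow_right_injective (le_refl 2) h).symm
          rw [if_neg h6]
        · intro h; exact absurd (Finset.mem_range.2 (by omega)) h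
      rw [h] at hco; simp at hco
    have hdeg : P.natDegree ≤ 2 ^ (r - 1) := by
      apply Polynomial.natDegree_sum_le_of_forall_le
      intro i hi
      rw [Polynomial.natDegree_X_pow]
      exact Nat.pow_le_pow_right (by norm_num) (by
        have := Finset.mem_range.1 hi; omega)
    have hsub : K ⊆ P.roots.toFinset := by
      intro x hx
      simp only [hK, Finset.mem_filter] at hx
      rw [Multiset.mem_toFinset, Polynomial.mem_roots hPne]
      rw [Polynomial.IsRoot, hP]
      simpa [Polynomial.eval_finset_sum, trF] using hx.2
    calc K.card ≤ P.roots.toFinset.card := Finset.card_le_card hsub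
      _ ≤ Multiset.card P.roots := Multiset.toFinset_card_le _
      _ ≤ P.natDegree := Polynomial.card_roots' P
      _ ≤ 2 ^ (r - 1) := hdeg
  have hIcard : I.card = 2 ^ (r - 1) := by
    have h7 : 2 * I.card = 2 * 2 ^ (r - 1) := by
      rw [← hq2, hF]
      conv_lhs => rw [show r = (r - 1) + 1 from (Nat.succ_pred_eq_of_pos hr).symm]
      rw [pow_succ]; ring
    exact Nat.eq_of_mul_eq_mul_left (by norm_num) h7
  have hIeqK : I = K := Finset.eq_of_subset_of_card_le hIK (by omega)
  have hcK : c ∈ K := by simp [hK, hc]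
  rw [← hIeqK, hI, Finset.mem_image] at hcK
  obtain ⟨t, _, ht⟩ := hcK
  exact ⟨t, ht⟩

lemma root_count [CharP F 2] (hr : 0 < r) (hF : Fintype.card F = 2 ^ r) (β : F) :
    (Finset.univ.filter fun a : F => a * a + β * a + 1 = 0).card
      = if β = 0 then 1 else if trF F r β⁻¹ = 0 then 2 else 0 := by
  have htwo : (2 : F) = 0 := CharTwo.two_eq_zero
  by_cases hβ : β = 0
  · rw [if_pos hβ, hβ]
    have : Finset.univ.filter (fun a : F => a * a + 0 * a + 1 = 0) = {1} := by
      ext a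
      simp only [Finset.mem_filter, Finset.mem_univ, true_and, Finset.mem_singleton]
      constructor
      · intro h
        have h2 : (a + 1) * (a + 1) = 0 := by
          linear_combination h + a * htwo
        have := mul_self_eq_zero.1 h2
        linear_combination this - htwo
      · rintro rfl; linear_combination htwo
    rw [this, Finset.card_singleton]
  · rw [if_neg hβ]
    have hβi : β * β⁻¹ = 1 := mul_inv_cancel₀ hβ
    have hbij : (Finset.univ.filter fun a : F => a * a + β * a + 1 = 0).card
        = (Finset.univ.filter fun t : F => t ^ 2 + t = β⁻¹ * β⁻¹).card := by
      refine Finset.card_bij' (fun a _ => β⁻¹ * a) (fun t _ => β * t) ?_ ?_ ?_ ?_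
      · intro a ha
        rw [Finset.mem_filter] at ha ⊢
        refine ⟨Finset.mem_univ _, ?_⟩
        linear_combination β⁻¹ * β⁻¹ * ha.2 - β⁻¹ * a * hβi - β⁻¹ * β⁻¹ * htwo
      · intro t ht
        rw [Finset.mem_filter] at ht ⊢
        refine ⟨Finset.mem_univ _, ?_⟩
        linear_combination β ^ 2 * ht.2 + (β * β⁻¹ + 1) * hβi + htwo
      · intro a _
        show β * (β⁻¹ * a) = a
        rw [← mul_assoc, hβi, one_mul]
      · intro t _
        show β⁻¹ * (β * t) = t
        rw [← mul_assoc, mul_comm β⁻¹ β, hβi, one_mul]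
    rw [hbij]
    have hc : trF F r (β⁻¹ * β⁻¹) = trF F r β⁻¹ := by
      rw [← pow_two]; exact trF_sq hF β⁻¹
    by_cases htr : trF F r β⁻¹ = 0
    · rw [if_pos htr]
      exact AS_card _ (exists_AS hr hF _ (hc.trans htr))
    · rw [if_neg htr]
      rw [Finset.card_eq_zero, Finset.filter_eq_empty_iff]
      intro t _
      intro h
      exact htr (hc ▸ h ▸ trF_AS hF t)

lemma Pmat_eq (n : ℕ) (A B : Matrix (Fin n) (Fin n) F) :
    Matrix.fromBlocks A 0 0 (A⁻¹)ᵀ * Matrix.fromBlocks 1 B 0 1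
      = Matrix.fromBlocks A (A * B) 0 (A⁻¹)ᵀ := by
  rw [Matrix.fromBlocks_multiply]; simp

lemma one_mem_Pmat (n : ℕ) : (1 : Mat F n) ∈ Pmat F n :=
  ⟨1, 0, isUnit_one, by simp, by rw [Pmat_eq]; simp⟩

lemma sigma_one : sigmaMat F 1 0 = 1 := by
  ext i j
  rcases i with i | i <;> rcases j with j | j <;>
    fin_cases i <;> fin_cases j <;>
    simp [sigmaMat, Matrix.one_apply]

lemma mem_P1 (w : Mat F 1) : w ∈ Pmat F 1 ↔
    w (Sum.inr 0) (Sum.inl 0) = 0 ∧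
    w (Sum.inl 0) (Sum.inl 0) * w (Sum.inr 0) (Sum.inr 0) = 1 := by
  constructor
  · rintro ⟨A, B, hA, hB, rfl⟩
    rw [Pmat_eq]
    have hdet : A 0 0 ≠ 0 := by
      have := (Matrix.isUnit_iff_isUnit_det A).1 hA
      rw [Matrix.det_fin_one] at this
      exact this.ne_zero
    have hinv : A⁻¹ 0 0 = (A 0 0)⁻¹ := by
      rw [Matrix.inv_def, Matrix.adjugate_fin_one, Matrix.det_fin_one]
      simp [Ring.inverse_eq_inv']
    refine ⟨rfl, ?_⟩
    show A 0 0 * (A⁻¹)ᵀ 0 0 = 1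
    rw [Matrix.transpose_apply, hinv, mul_inv_cancel₀ hdet]
  · rintro ⟨h1, h2⟩
    set a := w (Sum.inl 0) (Sum.inl 0) with ha
    have ha0 : a ≠ 0 := by
      intro h; rw [h, zero_mul] at h2; exact zero_ne_one h2
    refine ⟨Matrix.of fun _ _ => a, Matrix.of fun _ _ => a⁻¹ * w (Sum.inl 0) (Sum.inr 0),
      ?_, rfl, ?_⟩
    · rw [Matrix.isUnit_iff_isUnit_det, Matrix.det_fin_one]
      exact ha0.isUnit
    · rw [Pmat_eq]
      have hinv : (Matrix.of fun _ _ : Fin 1 => a)⁻¹ 0 0 = a⁻¹ := by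
        rw [Matrix.inv_def, Matrix.adjugate_fin_one, Matrix.det_fin_one]
        simp [Ring.inverse_eq_inv']
      ext i j
      rcases i with i | i <;> rcases j with j | j <;>
        rw [Fin.fin_one_eq_zero i, Fin.fin_one_eq_zero j]
      · rfl
      · rw [Matrix.fromBlocks_apply₁₂, Matrix.mul_apply, Fin.sum_univ_one,
          Matrix.of_apply, Matrix.of_apply, ← mul_assoc, mul_inv_cancel₀ ha0, one_mul]
      · rw [Matrix.fromBlocks_apply₂₁]; exact h1
      · rw [Matrix.fromBlocks_apply₂₂, Matrix.transpose_apply, hinv]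
        exact eq_inv_of_mul_eq_one_right h2

lemma mem_DCneg1 (w : Mat F 1) : w ∈ DCneg F 1 ↔
    w (Sum.inr 0) (Sum.inl 0) = 0 ∧
    w (Sum.inl 0) (Sum.inl 0) * w (Sum.inr 0) (Sum.inr 0) = 1 := by
  constructor
  · rintro ⟨p, hp, p', hp', rfl⟩
    rw [show (1 : ℕ) - 1 = 0 from rfl, sigma_one, mul_one]
    obtain ⟨hp1, hp2⟩ := (mem_P1 p).1 hp
    obtain ⟨hp1', hp2'⟩ := (mem_P1 p').1 hp'
    have hmul : ∀ i j, (p * p') i j =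
        p i (Sum.inl 0) * p' (Sum.inl 0) j + p i (Sum.inr 0) * p' (Sum.inr 0) j := by
      intro i j
      rw [Matrix.mul_apply, Fintype.sum_sum_type, Fin.sum_univ_one, Fin.sum_univ_one]
    constructor
    · rw [hmul, hp1, hp1', mul_zero, zero_mul, add_zero]
    · rw [hmul, hmul, hp1, hp1']
      simp only [mul_zero, zero_mul, add_zero, zero_add]
      calc p (Sum.inl 0) (Sum.inl 0) * p' (Sum.inl 0) (Sum.inl 0) *
            (p (Sum.inr 0) (Sum.inr 0) * p' (Sum.inr 0) (Sum.inr 0))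
          = (p (Sum.inl 0) (Sum.inl 0) * p (Sum.inr 0) (Sum.inr 0)) *
            (p' (Sum.inl 0) (Sum.inl 0) * p' (Sum.inr 0) (Sum.inr 0)) := by ring
        _ = 1 := by rw [hp2, hp2', one_mul]
  · intro h
    exact ⟨w, (mem_P1 w).2 h, 1, one_mem_Pmat 1,
      by rw [show (1 : ℕ) - 1 = 0 from rfl, sigma_one, mul_one, mul_one]⟩

lemma trace1 (w : Mat F 1) :
    Matrix.trace w = w (Sum.inl 0) (Sum.inl 0) + w (Sum.inr 0) (Sum.inr 0) := by
  rw [Matrix.trace, Fintype.sum_sum_type, Fin.sum_univ_one, Fin.sum_univ_one]; rfl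

/-- the matrix `[[a,b],[0,a⁻¹]]` -/
def Mone (a b : F) : Mat F 1 :=
  Matrix.fromBlocks (Matrix.of fun _ _ => a) (Matrix.of fun _ _ => b) 0
    (Matrix.of fun _ _ => a⁻¹)

lemma NDC1_card (β : F) [CharP F 2] :
    NDC F 1 (DCneg F 1) β =
      (Finset.univ.filter fun a : F => a * a + β * a + 1 = 0).card * Fintype.card F := by
  have htwo : (2 : F) = 0 := CharTwo.two_eq_zero
  rw [NDC, ← Finset.card_univ, ← Finset.card_product]
  refine Finset.card_bij'
    (fun w _ => (w (Sum.inl 0) (Sum.inl 0), w (Sum.inl 0) (Sum.inr 0)))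
    (fun p _ => Mone p.1 p.2) ?_ ?_ ?_ ?_
  · intro w hw
    rw [Finset.mem_filter] at hw
    obtain ⟨-, hmem, htr⟩ := hw
    obtain ⟨h1, h2⟩ := (mem_DCneg1 w).1 hmem
    rw [trace1] at htr
    rw [Finset.mem_product, Finset.mem_filter]
    refine ⟨⟨Finset.mem_univ _, ?_⟩, Finset.mem_univ _⟩
    linear_combination w (Sum.inl 0) (Sum.inl 0) * htr - h2 +
      β * w (Sum.inl 0) (Sum.inl 0) * htwo
  · rintro ⟨a, b⟩ hab
    rw [Finset.mem_product, Finset.mem_filter] at hab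
    obtain ⟨⟨-, ha⟩, -⟩ := hab
    have ha0 : a ≠ 0 := by
      intro h; rw [h] at ha; simp at ha
    have hinv : a * a⁻¹ = 1 := mul_inv_cancel₀ ha0
    rw [Finset.mem_filter]
    refine ⟨Finset.mem_univ _, (mem_DCneg1 _).2 ⟨?_, ?_⟩, ?_⟩
    · show (0 : Matrix (Fin 1) (Fin 1) F) 0 0 = 0; rfl
    · show a * a⁻¹ = 1; exact hinv
    · rw [trace1]
      show a + a⁻¹ = β
      field_simp
      linear_combination ha + (a * β + 1) * htwo + (-1 - 2 * a * β) * htwo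
  · intro w hw
    rw [Finset.mem_filter] at hw
    obtain ⟨-, hmem, -⟩ := hw
    obtain ⟨h1, h2⟩ := (mem_DCneg1 w).1 hmem
    ext i j
    rcases i with i | i <;> rcases j with j | j <;>
      rw [Fin.fin_one_eq_zero i, Fin.fin_one_eq_zero j]
    · rfl
    · rfl
    · show (0 : Matrix (Fin 1) (Fin 1) F) 0 0 = _
      rw [Matrix.zero_apply]; exact h1.symm
    · show (fun _ _ => _) (0 : Fin 1) (0 : Fin 1) = _
      exact (eq_inv_of_mul_eq_one_right h2).symm
  · rintro ⟨a, b⟩ -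
    rfl

lemma trace_fromBlocks' {n : ℕ} (A B C D : Matrix (Fin n) (Fin n) F) :
    (Matrix.fromBlocks A B C D).trace = A.trace + D.trace := by
  simp [Matrix.trace, Fintype.sum_sum_type, Matrix.diag]

lemma parta [CharP F 2] (n : ℕ) (hn : 3 ≤ n) (β : F) : 0 < NDC F n (DCneg F n) β := by
  have hn0 : 0 < n := by omega
  set i0 : Fin n := ⟨0, hn0⟩ with hi0
  set B : Matrix (Fin n) (Fin n) F :=
    Matrix.of (fun i j => if i = i0 ∧ j = i0 then β else 0) with hB
  set E : Matrix (Fin n) (Fin n) F :=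
    Matrix.of (fun i j => if i = j ∧ n - 1 ≤ (i : ℕ) then 1 else 0) with hE
  set D : Matrix (Fin n) (Fin n) F :=
    Matrix.of (fun i j => if i = j ∧ (i : ℕ) < n - 1 then 1 else 0) with hD
  set w : Mat F n := Matrix.fromBlocks 1 B 0 1 * sigmaMat F n (n - 1) with hw
  have hp : Matrix.fromBlocks 1 B 0 1 ∈ Pmat F n := by
    refine ⟨1, B, isUnit_one, ?_, by rw [Pmat_eq]; simp⟩
    ext i j
    simp only [Matrix.transpose_apply, hB, Matrix.of_apply]
    exact if_congr ⟨fun h => ⟨h.2, h.1⟩, fun h => ⟨h.2, h.1⟩⟩ rfl rfl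
  have hmem : w ∈ DCneg F n := by
    refine ⟨_, hp, 1, one_mem_Pmat n, ?_⟩
    rw [mul_one, hw]
  have htr : Matrix.trace w = β := by
    have hmul : w = Matrix.fromBlocks (E + B * D) (D + B * E) D E := by
      rw [hw, sigmaMat, ← hE, ← hD, Matrix.fromBlocks_multiply]
      simp
    rw [hmul, trace_fromBlocks', Matrix.trace_add]
    have h2 : E.trace + (B * D).trace + E.trace = (B * D).trace := by
      have := CharTwo.add_self_eq_zero (E.trace)
      ring_nf
      linear_combination this
    rw [h2]
    have hDd : D i0 i0 = 1 := by
      rw [hD, Matrix.of_apply, if_pos ⟨rfl, by simp [hi0]; omega⟩]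
    rw [Matrix.trace]
    rw [Finset.sum_eq_single i0]
    · rw [Matrix.diag_apply, Matrix.mul_apply, Finset.sum_eq_single i0]
      · rw [hB, Matrix.of_apply, if_pos ⟨rfl, rfl⟩, hDd, mul_one]
      · intro k _ hk
        rw [hB, Matrix.of_apply, if_neg (fun h => hk h.2), zero_mul]
      · intro h; exact absurd (Finset.mem_univ i0) h
    · intro i _ hi
      rw [Matrix.diag_apply, Matrix.mul_apply]
      apply Finset.sum_eq_zero
      intro k _
      rw [hB, Matrix.of_apply, if_neg (fun h => hi h.1), zero_mul]
    · intro h; exact absurd (Finset.mem_univ i0) h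
  rw [NDC, Finset.card_pos]
  exact ⟨w, Finset.mem_filter.2 ⟨Finset.mem_univ w, hmem, htr⟩⟩

end AuxiliaryLemmas

/-- Corollary 10(a): positivity of `N_{DC⁻(n,q)}(β)` for odd
`n ≥ 3`, and its exact values for `n = 1`. -/
theorem NDC_neg_positivity
    (F : Type*) [Field F] [Fintype F] (r q : ℕ) (hr : 0 < r) (hq : q = 2 ^ r)
    (hF : Fintype.card F = q) :
    (∀ n : ℕ, Odd n → 3 ≤ n → ∀ β : F, 0 < NDC F n (DCneg F n) β) ∧
    (∀ β : F, NDC F 1 (DCneg F 1) β =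
      if β = 0 then q else if trF F r β⁻¹ = 0 then 2 * q else 0) := by
  subst hq
  haveI : CharP F 2 := charF hr hF
  constructor
  · intro n _ hn β
    exact parta n hn β
  · intro β
    rw [NDC1_card β, root_count hr hF β, hF]
    by_cases hβ : β = 0
    · rw [if_pos hβ, if_pos hβ, one_mul]
    · rw [if_neg hβ, if_neg hβ]
      by_cases htr : trF F r β⁻¹ = 0
      · rw [if_pos htr, if_pos htr]
      · rw [if_neg htr, if_neg htr, zero_mul]
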